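/- Every connected [4,2]-graph of order n ≥ 8 has at least ⌊(n−1)²/4⌋ + 1 edges, with equality if and only if G is the barbell graph B_n, obtained from the disjoint union K_{⌊n/2⌋} + K_{⌈n/2⌉} by adding a single edge between the two complete graphs. -/
import Mathlib


open SimpleGraph

/-- The number of edges of `G` both of whose endpoints lie in `S`. -/
noncomputable def edgesWithin {V : Type*} (G : SimpleGraph V) (S : Finset V) : ℕ :=
  {e : Sym2 V | e ∈ G.edgeSet ∧ ∀ v ∈ e, v ∈ S}.ncard

/-- `G` is an `[s,t]`-graph: order at least `s`, and every induced subgraph on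
`s` vertices has at least `t` edges. -/
def IsSTGraph {V : Type*} [Fintype V] (G : SimpleGraph V) (s t : ℕ) : Prop :=
  s ≤ Fintype.card V ∧ ∀ S : Finset V, S.card = s → t ≤ edgesWithin G S

/-- `G` is 2-connected: at least 3 vertices, and deleting any single vertex
leaves a connected graph. -/
def TwoConnected {V : Type*} [Fintype V] (G : SimpleGraph V) : Prop :=
  3 ≤ Fintype.card V ∧ ∀ v : V, (G.induce {w : V | w ≠ v}).Connected

/-- The edge `e` lies on a cycle of length `k` in `G`. -/
def EdgeOnCycle {V : Type*} (G : SimpleGraph V) (e : Sym2 V) (k : ℕ) : Prop :=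
  ∃ (u : V) (w : G.Walk u u), w.IsCycle ∧ w.length = k ∧ e ∈ w.edges

/-- `G` has a cycle of length `k`. -/
def HasCycleLen {V : Type*} (G : SimpleGraph V) (k : ℕ) : Prop :=
  ∃ (u : V) (w : G.Walk u u), w.IsCycle ∧ w.length = k

namespace BarbellAux

open Finset

open scoped Classical

variable {V : Type*} [Fintype V] [DecidableEq V]

noncomputable def bdeg (H : SimpleGraph V) (S : Finset V) (v : V) : ℕ :=
  (S.filter (H.Adj v)).card

noncomputable def bcr (H : SimpleGraph V) (A B : Finset V) : ℕ :=
  ((A ×ˢ B).filter fun p => H.Adj p.1 p.2).card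

def TFOn (H : SimpleGraph V) (S : Finset V) : Prop :=
  ∀ x ∈ S, ∀ y ∈ S, ∀ z ∈ S, ¬(H.Adj x y ∧ H.Adj x z ∧ H.Adj y z)

def DFree (H : SimpleGraph V) : Prop :=
  ∀ a b c d : V, c ≠ d → H.Adj a b → H.Adj a c → H.Adj a d → H.Adj b c → H.Adj b d → False

variable {H : SimpleGraph V} {A B C S T : Finset V} {v : V}

set_option linter.unusedSectionVars false

lemma bcr_eq_sum : bcr H A B = ∑ a ∈ A, bdeg H B a := by
  unfold bcr bdeg
  rw [Finset.card_filter, Finset.sum_product]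
  exact Finset.sum_congr rfl fun a _ => (Finset.card_filter _ _).symm

lemma bdeg_le_card : bdeg H S v ≤ S.card := Finset.card_filter_le _ _

lemma bdeg_mono (h : A ⊆ B) : bdeg H A v ≤ bdeg H B v :=
  Finset.card_le_card (Finset.filter_subset_filter _ h)

lemma bdeg_union (h : Disjoint A B) :
    bdeg H (A ∪ B) v = bdeg H A v + bdeg H B v := by
  unfold bdeg
  rw [Finset.filter_union,
    Finset.card_union_of_disjoint (h.mono (Finset.filter_subset _ _) (Finset.filter_subset _ _))]

lemma bcr_symm : bcr H A B = bcr H B A := by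
  rw [bcr_eq_sum, bcr_eq_sum]
  unfold bdeg
  simp only [Finset.card_filter]
  rw [Finset.sum_comm]
  exact Finset.sum_congr rfl fun b _ => Finset.sum_congr rfl fun a _ => by
    by_cases h : H.Adj a b
    · simp [h, h.symm]
    · have h2 : ¬ H.Adj b a := fun h' => h h'.symm
      simp [h, h2]


lemma bcr_union_left (h : Disjoint A B) :
    bcr H (A ∪ B) C = bcr H A C + bcr H B C := by
  rw [bcr_eq_sum, bcr_eq_sum, bcr_eq_sum, Finset.sum_union h]

lemma bcr_union_right (h : Disjoint A B) :
    bcr H C (A ∪ B) = bcr H C A + bcr H C B := by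
  rw [bcr_eq_sum, bcr_eq_sum, bcr_eq_sum, ← Finset.sum_add_distrib]
  exact Finset.sum_congr rfl fun c _ => bdeg_union h

lemma bcr_split (hd : Disjoint A B) (hu : A ∪ B = S) :
    bcr H S S = bcr H A A + bcr H B B + 2 * bcr H B A := by
  rw [← hu, bcr_union_left hd, bcr_union_right hd, bcr_union_right hd,
    bcr_symm (A := A) (B := B)]
  ring

/-! ### Arithmetic lemmas -/

lemma d4e (k : ℕ) : (2*k)^2/4 = k*k := by
  have h : (2*k)^2 = k*k*4 := by ring
  rw [h, Nat.mul_div_cancel _ (by norm_num)]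

lemma d4o (k : ℕ) : (2*k+1)^2/4 = k*k + k := by
  have h : (2*k+1)^2 = 4*(k*k+k) + 1 := by ring
  rw [h, Nat.mul_add_div (by norm_num)]
  norm_num

/-- The bound function for diamond-free graphs. -/
def fbd (m : ℕ) : ℕ := if m = 3 then 3 else m^2/4

lemma arMantelF (m : ℕ) : m^2/4 ≤ fbd m := by
  unfold fbd
  split
  · next h => subst h; norm_num
  · exact le_refl _


lemma ar1 (m : ℕ) (hm : 3 ≤ m) : fbd (m - 3) + m ≤ fbd m := by
  by_cases h7 : m ≤ 7
  · interval_cases m <;> decide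
  · obtain ⟨j, hj⟩ : ∃ j, m = 2*j + 8 ∨ m = 2*j + 9 := ⟨(m - 8)/2, by omega⟩
    have e1 : ∀ a : ℕ, a ≠ 3 → fbd a = a^2/4 := by
      intro a ha; unfold fbd; rw [if_neg ha]
    rcases hj with rfl | rfl
    · rw [show 2*j+8-3 = 2*(j+2)+1 from by omega, e1 _ (by omega), e1 _ (by omega),
        d4o, show 2*j+8 = 2*(j+4) from by ring, d4e]
      nlinarith
    · rw [show 2*j+9-3 = 2*(j+3) from by omega, e1 _ (by omega), e1 _ (by omega),
        d4e, show 2*j+9 = 2*(j+4)+1 from by ring, d4o]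
      nlinarith

lemma ar2 (n : ℕ) (hn : 8 ≤ n) : fbd (n - 3) + n + 2 ≤ n^2/4 := by
  obtain ⟨j, hj⟩ : ∃ j, n = 2*j + 8 ∨ n = 2*j + 9 := ⟨(n - 8)/2, by omega⟩
  have e1 : ∀ a : ℕ, a ≠ 3 → fbd a = a^2/4 := by
    intro a ha; unfold fbd; rw [if_neg ha]
  rcases hj with rfl | rfl
  · rw [show 2*j+8-3 = 2*(j+2)+1 from by omega, e1 _ (by omega), d4o,
      show 2*j+8 = 2*(j+4) from by ring, d4e]
    nlinarith
  · rw [show 2*j+9-3 = 2*(j+3) from by omega, e1 _ (by omega), d4e,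
      show 2*j+9 = 2*(j+4)+1 from by ring, d4o]
    nlinarith

lemma ar3 {n d : ℕ} (h : d ≤ n) : (n - d) * d ≤ n^2/4 := by
  rw [Nat.le_div_iff_mul_le (by norm_num : 0 < 4)]
  obtain ⟨m, rfl⟩ := Nat.exists_eq_add_of_le h
  rw [show d + m - d = m from by omega]
  zify
  nlinarith [sq_nonneg ((d:ℤ) - m)]

lemma ar4 {n d : ℕ} (hn : 8 ≤ n) (hd : d ≤ n) (h : n^2/4 ≤ (n - d)*d + 1) :
    ((n - d)*d = n^2/4 ∧ (2*d = n - 1 ∨ 2*d = n ∨ 2*d = n + 1)) ∨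
    ((n - d)*d + 1 = n^2/4 ∧ n % 2 = 0 ∧ (2*d + 2 = n ∨ 2*d = n + 2)) := by
  obtain ⟨k, hk⟩ : ∃ k, n = 2*k ∨ n = 2*k+1 := ⟨n/2, by omega⟩
  rcases hk with rfl | rfl
  · rw [d4e] at h ⊢
    have hk4 : 4 ≤ k := by omega
    have h' : (k:ℤ)*k ≤ (2*k - d)*d + 1 := by
      have := h
      zify [hd] at this
      exact_mod_cast this
    have h1 : ((k:ℤ) - d)^2 ≤ 1 := by nlinarith
    have h2 : (k:ℤ) - d ≤ 1 := by nlinarith [sq_nonneg ((k:ℤ) - d - 1)]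
    have h3 : (-1 : ℤ) ≤ (k:ℤ) - d := by nlinarith [sq_nonneg ((k:ℤ) - d + 1)]
    have hcase : d = k - 1 ∨ d = k ∨ d = k + 1 := by omega
    rcases hcase with h | h | h <;> subst d
    · refine Or.inr ⟨?_, by omega, by omega⟩
      rw [show 2*k - (k-1) = k+1 from by omega]
      zify [show 1 ≤ k from by omega]
      ring
    · refine Or.inl ⟨?_, by omega⟩
      rw [show 2*k - k = k from by omega]
    · refine Or.inr ⟨?_, by omega, by omega⟩
      rw [show 2*k - (k+1) = k-1 from by omega]
      zify [show 1 ≤ k from by omega]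
      ring
  · rw [d4o] at h ⊢
    have hk4 : 4 ≤ k := by omega
    have h' : (k:ℤ)*k + k ≤ (2*k + 1 - d)*d + 1 := by
      have := h
      zify [show d ≤ 2*k+1 from hd] at this
      exact_mod_cast this
    have h1 : ((k:ℤ) - d)^2 + ((k:ℤ) - d) ≤ 1 := by nlinarith
    have h2 : (k:ℤ) - d ≤ 0 := by nlinarith [sq_nonneg ((k:ℤ) - d - 1)]
    have h3 : (-1 : ℤ) ≤ (k:ℤ) - d := by nlinarith [sq_nonneg ((k:ℤ) - d + 2)]
    have hcase : d = k ∨ d = k + 1 := by omega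
    rcases hcase with h | h <;> subst d
    · refine Or.inl ⟨?_, by omega⟩
      rw [show 2*k + 1 - k = k+1 from by omega]
      ring
    · refine Or.inl ⟨?_, by omega⟩
      rw [show 2*k + 1 - (k+1) = k from by omega]
      ring

lemma ar5 (n : ℕ) (hn : 1 ≤ n) :
    n^2 - n + 2 = 2*((n-1)^2/4 + 1) + 2*(n^2/4) := by
  obtain ⟨j, hj⟩ : ∃ j, n = 2*j+1 ∨ n = 2*j+2 := ⟨(n-1)/2, by omega⟩
  rcases hj with rfl | rfl
  · have e1 : (2*j+1-1)^2/4 = j*j := by rw [show 2*j+1-1 = 2*j from by omega, d4e]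
    have e2 : (2*j+1)^2/4 = j*j + j := d4o j
    have e3 : (2*j+1)^2 = 4*(j*j)+4*j+1 := by ring
    rw [e1, e2, e3]
    generalize j*j = a
    omega
  · have e1 : (2*j+2-1)^2/4 = j*j + j := by rw [show 2*j+2-1 = 2*j+1 from by omega, d4o]
    have e2 : (2*j+2)^2/4 = j*j + 2*j + 1 := by
      rw [show 2*j+2 = 2*(j+1) from by ring, d4e]; ring
    have e3 : (2*j+2)^2 = 4*(j*j) + 8*j + 4 := by ring
    rw [e1, e2, e3]
    generalize j*j = a
    omega

lemma ar6 (n : ℕ) (hn : 8 ≤ n) :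
    (n/2)*(n/2 - 1) + ((n+1)/2)*((n+1)/2 - 1) + 2 = 2*((n-1)^2/4 + 1) := by
  obtain ⟨i, hi⟩ : ∃ i, n = 2*i + 8 ∨ n = 2*i + 9 := ⟨(n-8)/2, by omega⟩
  rcases hi with rfl | rfl
  · rw [show (2*i+8)/2 = i+4 from by omega, show (2*i+8+1)/2 = i+4 from by omega,
      show 2*i+8-1 = 2*(i+3)+1 from by omega, d4o,
      show i+4-1 = i+3 from by omega]
    ring
  · rw [show (2*i+9)/2 = i+4 from by omega, show (2*i+9+1)/2 = i+5 from by omega,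
      show 2*i+9-1 = 2*(i+4) from by omega, d4e,
      show i+4-1 = i+3 from by omega, show i+5-1 = i+4 from by omega]
    ring

lemma all_eq {B : Finset V} {f : V → ℕ} {d : ℕ} (hle : ∀ x ∈ B, f x ≤ d)
    (hsum : B.card * d ≤ ∑ x ∈ B, f x) : ∀ x ∈ B, f x = d := by
  by_contra hcon
  push_neg at hcon
  obtain ⟨x₀, hx₀, hne⟩ := hcon
  have hlt : f x₀ < d := lt_of_le_of_ne (hle _ hx₀) hne
  have h : ∑ x ∈ B, f x < ∑ _x ∈ B, d :=
    Finset.sum_lt_sum hle ⟨x₀, hx₀, hlt⟩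
  rw [Finset.sum_const, smul_eq_mul] at h
  omega


lemma mantel_within (htf : TFOn H S) : bcr H S S ≤ 2 * (S.card^2/4) := by
  rcases S.eq_empty_or_nonempty with rfl | hne
  · simp [bcr]
  obtain ⟨v, hv, hmax⟩ := Finset.exists_max_image S (bdeg H S) hne
  set A := S.filter (H.Adj v) with hAdef
  set B := S \ A with hBdef
  have hAS : A ⊆ S := Finset.filter_subset _ _
  have hdisj : Disjoint A B := Finset.disjoint_sdiff
  have hUn : A ∪ B = S := Finset.union_sdiff_of_subset hAS
  have hAind : ∀ x ∈ A, ∀ y ∈ A, ¬H.Adj x y := by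
    intro x hx y hy hxy
    exact htf v hv x (hAS hx) y (hAS hy)
      ⟨(Finset.mem_filter.mp hx).2, (Finset.mem_filter.mp hy).2, hxy⟩
  have hAA : bcr H A A = 0 := by
    apply Finset.card_eq_zero.mpr
    apply Finset.filter_eq_empty_iff.mpr
    intro p hp
    exact hAind p.1 (Finset.mem_product.mp hp).1 p.2 (Finset.mem_product.mp hp).2
  have hsplit := bcr_split (H := H) hdisj hUn
  have hdegsplit : ∀ u, bdeg H S u = bdeg H A u + bdeg H B u := by
    intro u; rw [← hUn, bdeg_union hdisj]
  have hBA : bcr H B A + bcr H B B = ∑ u ∈ B, bdeg H S u := by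
    rw [bcr_eq_sum, bcr_eq_sum, ← Finset.sum_add_distrib]
    exact Finset.sum_congr rfl fun u _ => (hdegsplit u).symm
  have hBAle : bcr H B A ≤ ∑ u ∈ B, bdeg H S u := by
    rw [bcr_eq_sum]
    exact Finset.sum_le_sum fun u _ => bdeg_mono hAS
  have hSB : ∑ u ∈ B, bdeg H S u ≤ B.card * bdeg H S v := by
    have := Finset.sum_le_card_nsmul B (bdeg H S) (bdeg H S v)
      (fun u hu => hmax u (Finset.mem_sdiff.mp hu).1)
    simpa using this
  have hcardA : A.card = bdeg H S v := rfl
  have hcardB : B.card = S.card - bdeg H S v := by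
    rw [hBdef, Finset.card_sdiff_of_subset hAS, hcardA]
  have hprod : (S.card - bdeg H S v) * bdeg H S v ≤ S.card^2/4 :=
    ar3 (hcardA ▸ Finset.card_le_card hAS)
  have : B.card * bdeg H S v ≤ S.card^2/4 := by rw [hcardB]; exact hprod
  omega

lemma tri_step (hdf : DFree H) {x y z : V} (hx : x ∈ S) (hy : y ∈ S) (hz : z ∈ S)
    (hxy : H.Adj x y) (hxz : H.Adj x z) (hyz : H.Adj y z) :
    bcr H S S ≤ bcr H (S \ {x, y, z}) (S \ {x, y, z}) + 2 * S.card := by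
  have hnxy : x ≠ y := hxy.ne
  have hnxz : x ≠ z := hxz.ne
  have hnyz : y ≠ z := hyz.ne
  set T : Finset V := {x, y, z} with hTdef
  set A := S \ T with hAdef
  have hTS : T ⊆ S := by
    rw [hTdef]
    exact Finset.insert_subset hx (Finset.insert_subset hy
      (Finset.singleton_subset_iff.mpr hz))
  have hdisj : Disjoint A T := Finset.sdiff_disjoint
  have hUn : A ∪ T = S := Finset.sdiff_union_of_subset hTS
  have hxT : x ∈ T := by rw [hTdef]; simp
  have hyT : y ∈ T := by rw [hTdef]; simp
  have hzT : z ∈ T := by rw [hTdef]; simp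
  have hsum3 : ∀ g : V → ℕ, ∑ t ∈ T, g t = g x + g y + g z := by
    intro g
    rw [hTdef, Finset.sum_insert (by simp [hnxy, hnxz]),
      Finset.sum_insert (by simp [hnyz]), Finset.sum_singleton]
    omega
  -- each vertex of the triangle has at least 2 neighbours in T
  have hdegT : ∀ t ∈ T, ∀ a b : V, a ∈ T → b ∈ T → a ≠ b → H.Adj t a → H.Adj t b →
      2 ≤ bdeg H T t := by
    intro t _ a b haT hbT hab hta htb
    have hsub : ({a, b} : Finset V) ⊆ T.filter (H.Adj t) := by
      intro w hw
      rcases Finset.mem_insert.mp hw with rfl | hw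
      · exact Finset.mem_filter.mpr ⟨haT, hta⟩
      · rw [Finset.mem_singleton.mp hw]
        exact Finset.mem_filter.mpr ⟨hbT, htb⟩
    have : ({a, b} : Finset V).card = 2 := by
      rw [Finset.card_insert_of_notMem (by simp [hab]), Finset.card_singleton]
    calc 2 = ({a, b} : Finset V).card := this.symm
      _ ≤ _ := Finset.card_le_card hsub
  have hdx : 2 ≤ bdeg H T x := hdegT x hxT y z hyT hzT hnyz hxy hxz
  have hdy : 2 ≤ bdeg H T y := hdegT y hyT x z hxT hzT hnxz hxy.symm hyz
  have hdz : 2 ≤ bdeg H T z := hdegT z hzT x y hxT hyT hnxy hxz.symm hyz.symm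
  have hTT : 6 ≤ bcr H T T := by
    rw [bcr_eq_sum, hsum3]
    omega
  -- degree sum bound over the triangle
  set nx := S.filter (H.Adj x) with hnx
  set ny := S.filter (H.Adj y) with hny
  set nz := S.filter (H.Adj z) with hnz
  have hixy : nx ∩ ny ⊆ {z} := by
    intro w hw
    obtain ⟨hw1, hw2⟩ := Finset.mem_inter.mp hw
    by_contra hwz
    rw [Finset.mem_singleton] at hwz
    exact hdf x y z w (fun h => hwz h.symm) hxy hxz
      (Finset.mem_filter.mp hw1).2 hyz (Finset.mem_filter.mp hw2).2
  have hixz : nx ∩ nz ⊆ {y} := by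
    intro w hw
    obtain ⟨hw1, hw2⟩ := Finset.mem_inter.mp hw
    by_contra hwy
    rw [Finset.mem_singleton] at hwy
    exact hdf x z y w (fun h => hwy h.symm) hxz hxy
      (Finset.mem_filter.mp hw1).2 hyz.symm (Finset.mem_filter.mp hw2).2
  have hiyz : ny ∩ nz ⊆ {x} := by
    intro w hw
    obtain ⟨hw1, hw2⟩ := Finset.mem_inter.mp hw
    by_contra hwx
    rw [Finset.mem_singleton] at hwx
    exact hdf y z x w (fun h => hwx h.symm) hyz hxy.symm
      (Finset.mem_filter.mp hw1).2 hxz.symm (Finset.mem_filter.mp hw2).2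
  have hcixy : (nx ∩ ny).card ≤ 1 := by
    calc (nx ∩ ny).card ≤ ({z} : Finset V).card := Finset.card_le_card hixy
      _ = 1 := Finset.card_singleton z
  have hcixz : (nx ∩ nz).card ≤ 1 := by
    calc (nx ∩ nz).card ≤ ({y} : Finset V).card := Finset.card_le_card hixz
      _ = 1 := Finset.card_singleton y
  have hciyz : (ny ∩ nz).card ≤ 1 := by
    calc (ny ∩ nz).card ≤ ({x} : Finset V).card := Finset.card_le_card hiyz
      _ = 1 := Finset.card_singleton x
  have h1 : (nx ∪ ny).card + (nx ∩ ny).card = nx.card + ny.card :=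
    Finset.card_union_add_card_inter nx ny
  have h2 : (nx ∪ ny ∪ nz).card + ((nx ∪ ny) ∩ nz).card = (nx ∪ ny).card + nz.card :=
    Finset.card_union_add_card_inter (nx ∪ ny) nz
  have h3 : ((nx ∪ ny) ∩ nz).card ≤ (nx ∩ nz).card + (ny ∩ nz).card := by
    rw [Finset.union_inter_distrib_right]
    exact Finset.card_union_le _ _
  have h4 : (nx ∪ ny ∪ nz).card ≤ S.card := by
    apply Finset.card_le_card
    exact Finset.union_subset (Finset.union_subset (Finset.filter_subset _ _)
      (Finset.filter_subset _ _)) (Finset.filter_subset _ _)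
  have hdegsum : bdeg H S x + bdeg H S y + bdeg H S z ≤ S.card + 3 := by
    have ex : bdeg H S x = nx.card := rfl
    have ey : bdeg H S y = ny.card := rfl
    have ez : bdeg H S z = nz.card := rfl
    omega
  -- assemble
  have hdegsplit : ∀ u, bdeg H S u = bdeg H A u + bdeg H T u := by
    intro u; rw [← hUn, bdeg_union hdisj]
  have hTA : bcr H T A + bcr H T T = bdeg H S x + bdeg H S y + bdeg H S z := by
    rw [bcr_eq_sum, bcr_eq_sum, ← Finset.sum_add_distrib, hsum3
      (fun t => bdeg H A t + bdeg H T t)]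
    rw [← hdegsplit, ← hdegsplit, ← hdegsplit]
  have hsplit := bcr_split (H := H) hdisj hUn
  omega

lemma lemA (hdf : DFree H) : ∀ S : Finset V, bcr H S S ≤ 2 * fbd S.card := by
  have main : ∀ (N : ℕ) (S : Finset V), S.card ≤ N → bcr H S S ≤ 2 * fbd S.card := by
    intro N
    induction N with
    | zero =>
      intro S hS
      have : S = ∅ := Finset.card_eq_zero.mp (Nat.le_antisymm hS (Nat.zero_le _))
      subst this
      simp [bcr]
    | succ N ih =>
      intro S hS
      by_cases htri : ∃ x ∈ S, ∃ y ∈ S, ∃ z ∈ S, H.Adj x y ∧ H.Adj x z ∧ H.Adj y z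
      · obtain ⟨x, hx, y, hy, z, hz, h1, h2, h3⟩ := htri
        have hTS : ({x, y, z} : Finset V) ⊆ S :=
          Finset.insert_subset hx (Finset.insert_subset hy
            (Finset.singleton_subset_iff.mpr hz))
        have hcT : ({x, y, z} : Finset V).card = 3 := by
          rw [Finset.card_insert_of_notMem (by simp [h1.ne, h2.ne]),
            Finset.card_insert_of_notMem (by simp [h3.ne]), Finset.card_singleton]
        have h3S : 3 ≤ S.card := hcT ▸ Finset.card_le_card hTS
        have hstep := tri_step hdf hx hy hz h1 h2 h3
        have hcA : (S \ {x, y, z}).card = S.card - 3 := by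
          rw [Finset.card_sdiff_of_subset hTS, hcT]
        have hih := ih (S \ {x, y, z}) (by omega)
        rw [hcA] at hih
        have har := ar1 S.card h3S
        omega
      · push_neg at htri
        have htf : TFOn H S := fun x hx y hy z hz hand =>
          htri x hx y hy z hz hand.1 hand.2.1 hand.2.2
        have := mantel_within (H := H) htf
        have := arMantelF S.card
        omega
  exact fun S => main S.card S le_rfl


lemma lemM {H : SimpleGraph V} (htf : TFOn H Finset.univ)
    (hcn : ∀ A B : Finset V, A.Nonempty → B.Nonempty → Disjoint A B → A ∪ B = Finset.univ →
      ¬(∀ a ∈ A, ∀ b ∈ B, H.Adj a b))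
    (hn : 8 ≤ Fintype.card V)
    (hD : 2 * ((Fintype.card V)^2/4) ≤ bcr H Finset.univ Finset.univ + 2) :
    bcr H Finset.univ Finset.univ + 2 = 2 * ((Fintype.card V)^2/4) ∧
    ∃ A B : Finset V, Disjoint A B ∧ A ∪ B = Finset.univ ∧
      A.card = Fintype.card V / 2 ∧ B.card = (Fintype.card V + 1) / 2 ∧
      (∀ x ∈ A, ∀ y ∈ A, ¬H.Adj x y) ∧ (∀ x ∈ B, ∀ y ∈ B, ¬H.Adj x y) ∧
      (∃! p : V × V, p.1 ∈ A ∧ p.2 ∈ B ∧ ¬H.Adj p.1 p.2) := by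
  set n := Fintype.card V with hndef
  haveI hnV : Nonempty V := Fintype.card_pos_iff.mp (by omega)
  obtain ⟨v, -, hmax⟩ :=
    Finset.exists_max_image Finset.univ (bdeg H Finset.univ) Finset.univ_nonempty
  set A := Finset.univ.filter (H.Adj v) with hAdef
  set B := Finset.univ \ A with hBdef
  set Δ := bdeg H Finset.univ v with hΔdef
  have hcardA : A.card = Δ := rfl
  have hUn : A ∪ B = Finset.univ := Finset.union_sdiff_of_subset (Finset.subset_univ A)
  have hdisj : Disjoint A B := Finset.disjoint_sdiff
  have hvA : v ∉ A := fun hv => H.irrefl (Finset.mem_filter.mp hv).2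
  have hvB : v ∈ B := Finset.mem_sdiff.mpr ⟨Finset.mem_univ v, hvA⟩
  have hcardB : B.card = n - Δ := by
    rw [hBdef, Finset.card_sdiff_of_subset (Finset.subset_univ _), Finset.card_univ, hcardA]
  have hΔle : Δ ≤ n := by
    rw [← hcardA]
    calc A.card ≤ (Finset.univ : Finset V).card := Finset.card_le_card (Finset.subset_univ A)
      _ = n := Finset.card_univ
  have hAmem : ∀ x ∈ A, H.Adj v x := fun x hx => (Finset.mem_filter.mp hx).2
  have hAind : ∀ x ∈ A, ∀ y ∈ A, ¬H.Adj x y := fun x hx y hy hxy =>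
    htf v (Finset.mem_univ v) x (Finset.mem_univ x) y (Finset.mem_univ y)
      ⟨hAmem x hx, hAmem y hy, hxy⟩
  have hAA : bcr H A A = 0 := by
    apply Finset.card_eq_zero.mpr
    apply Finset.filter_eq_empty_iff.mpr
    intro p hp
    exact hAind p.1 (Finset.mem_product.mp hp).1 p.2 (Finset.mem_product.mp hp).2
  have hsplit := bcr_split (H := H) hdisj hUn
  rw [hAA] at hsplit
  have hdegsplit : ∀ u, bdeg H Finset.univ u = bdeg H A u + bdeg H B u := fun u => by
    rw [← hUn, bdeg_union hdisj]
  set SB := ∑ u ∈ B, bdeg H Finset.univ u with hSBdef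
  have hsum : bcr H B A + bcr H B B = SB := by
    rw [bcr_eq_sum, bcr_eq_sum, hSBdef, ← Finset.sum_add_distrib]
    exact Finset.sum_congr rfl fun u _ => (hdegsplit u).symm
  have hSBle : SB ≤ B.card * Δ := by
    rw [hSBdef]
    have := Finset.sum_le_card_nsmul B (bdeg H Finset.univ) Δ
      (fun u _ => hmax u (Finset.mem_univ u))
    simpa using this
  have hBΔ : B.card * Δ = (n - Δ) * Δ := by rw [hcardB]
  have hq_le : n^2/4 ≤ (n - Δ)*Δ + 1 := by omega
  have hfull : (1 ≤ Δ) → (∀ u ∈ B, bdeg H A u = Δ) → False := by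
    intro hΔ1 hall
    refine hcn A B (Finset.card_pos.mp (by omega)) ⟨v, hvB⟩ hdisj hUn ?_
    intro a ha b hb
    have hc : (A.filter (H.Adj b)).card = Δ := hall b hb
    have h1 : A.filter (H.Adj b) = A :=
      Finset.eq_of_subset_of_card_le (Finset.filter_subset _ _) (by omega)
    have : a ∈ A.filter (H.Adj b) := h1.symm ▸ ha
    exact ((Finset.mem_filter.mp this).2).symm
  have halldeg : SB = B.card * Δ → ∀ u ∈ B, bdeg H Finset.univ u = Δ := by
    intro hSBeq
    exact all_eq (fun u _ => hmax u (Finset.mem_univ u)) (by rw [← hSBdef]; omega)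
  have hBzero : bcr H B B = 0 → ∀ u ∈ B, bdeg H B u = 0 := by
    intro h0 u hu
    exact (Finset.sum_eq_zero_iff.mp (by rw [← bcr_eq_sum]; exact h0)) u hu
  rcases ar4 hn hΔle hq_le with ⟨hPq, hcases⟩ | ⟨hPq, hpar, hcases⟩
  swap
  · -- balanced-off-by-one case: complete bipartite, contradiction with connectivity
    exfalso
    have hΔ1 : 1 ≤ Δ := by rcases hcases with h | h <;> omega
    have hDB0 : bcr H B B = 0 := by omega
    have hSBeq : SB = B.card * Δ := by omega
    have hdegB0 := hBzero hDB0
    have hA' := halldeg hSBeq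
    apply hfull hΔ1
    intro u hu
    have h0 := hdegsplit u
    have h1 := hA' u hu
    have h2 := hdegB0 u hu
    omega
  · -- main case
    have hΔ1 : 1 ≤ Δ := by rcases hcases with h | h | h <;> omega
    have hDB2 : bcr H B B ≤ 2 := by omega
    by_cases hDB0 : bcr H B B = 0
    · have hCBA : bcr H B A = SB := by omega
      have hCBAle : bcr H B A + 1 ≤ n^2/4 := by
        by_contra hcon
        have hSBeq : SB = B.card * Δ := by omega
        have hA' := halldeg hSBeq
        have hdegB0 := hBzero hDB0
        apply hfull hΔ1
        intro u hu
        have h0 := hdegsplit u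
        have h1 := hA' u hu
        have h2 := hdegB0 u hu
        omega
      have hconc1 : bcr H Finset.univ Finset.univ + 2 = 2*(n^2/4) := by omega
      have hCBAeq : bcr H B A + 1 = n^2/4 := by omega
      set P := (B ×ˢ A).filter (fun p : V × V => ¬ H.Adj p.1 p.2) with hPdef
      have hcnt : bcr H B A + P.card = (B ×ˢ A).card := by
        rw [hPdef]
        exact Finset.card_filter_add_card_filter_not (fun p : V × V => H.Adj p.1 p.2)
      have hprodcard : (B ×ˢ A).card = n^2/4 := by
        rw [Finset.card_product, hcardA, hBΔ, hPq]
      have hP1 : P.card = 1 := by omega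
      obtain ⟨p₀, hp₀⟩ := Finset.card_eq_one.mp hP1
      have hp₀mem : p₀ ∈ P := by rw [hp₀]; exact Finset.mem_singleton_self p₀
      have hb₀ : p₀.1 ∈ B := (Finset.mem_product.mp (Finset.mem_filter.mp hp₀mem).1).1
      have ha₀ : p₀.2 ∈ A := (Finset.mem_product.mp (Finset.mem_filter.mp hp₀mem).1).2
      have hnadj : ¬H.Adj p₀.1 p₀.2 := (Finset.mem_filter.mp hp₀mem).2
      have huniq : ∀ p' : V × V, p'.1 ∈ B → p'.2 ∈ A → ¬H.Adj p'.1 p'.2 → p' = p₀ := by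
        intro p' h1 h2 h3
        have hm : p' ∈ P := Finset.mem_filter.mpr ⟨Finset.mem_product.mpr ⟨h1, h2⟩, h3⟩
        rw [hp₀] at hm
        exact Finset.mem_singleton.mp hm
      have hBind : ∀ x ∈ B, ∀ y ∈ B, ¬H.Adj x y := by
        intro x hx y hy hadj
        have h0 : ((B ×ˢ B).filter fun p : V × V => H.Adj p.1 p.2) = ∅ :=
          Finset.card_eq_zero.mp hDB0
        have hmem : ((x, y) : V × V) ∈ (B ×ˢ B).filter (fun p : V × V => H.Adj p.1 p.2) :=
          Finset.mem_filter.mpr ⟨Finset.mem_product.mpr ⟨hx, hy⟩, hadj⟩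
        rw [h0] at hmem
        exact absurd hmem (Finset.notMem_empty _)
      have hsymn : ∀ a b : V, ¬H.Adj a b → ¬H.Adj b a := fun a b h h' => h h'.symm
      refine ⟨hconc1, ?_⟩
      rcases (show Δ = n/2 ∨ (n - Δ) = n/2 by rcases hcases with h | h | h <;> omega)
        with hval | hval
      · refine ⟨A, B, hdisj, hUn, by omega, by omega, hAind, hBind,
          ⟨(p₀.2, p₀.1), ⟨ha₀, hb₀, hsymn _ _ hnadj⟩, ?_⟩⟩
        rintro ⟨a, b⟩ ⟨h1, h2, h3⟩
        have hp := huniq (b, a) h2 h1 (hsymn _ _ h3)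
        have hb : b = p₀.1 := congrArg Prod.fst hp
        have ha : a = p₀.2 := congrArg Prod.snd hp
        simp [Prod.ext_iff, ha, hb]
      · refine ⟨B, A, hdisj.symm, by rw [Finset.union_comm]; exact hUn, by omega, by omega,
          hBind, hAind, ⟨p₀, ⟨hb₀, ha₀, hnadj⟩, ?_⟩⟩
        rintro ⟨a, b⟩ ⟨h1, h2, h3⟩
        exact huniq (a, b) h1 h2 h3
    · -- an edge inside B: contradiction
      exfalso
      have hDBpos : 0 < bcr H B B := Nat.pos_of_ne_zero hDB0
      have hne2 : ((B ×ˢ B).filter fun p : V × V => H.Adj p.1 p.2).Nonempty :=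
        Finset.card_pos.mp hDBpos
      obtain ⟨⟨x, y⟩, hxy_mem⟩ := hne2
      have hx : x ∈ B := (Finset.mem_product.mp (Finset.mem_filter.mp hxy_mem).1).1
      have hy : y ∈ B := (Finset.mem_product.mp (Finset.mem_filter.mp hxy_mem).1).2
      have hadj : H.Adj x y := (Finset.mem_filter.mp hxy_mem).2
      have hxyne : x ≠ y := hadj.ne
      have hsub : ({((x, y) : V × V), (y, x)} : Finset (V × V)) ⊆
          (B ×ˢ B).filter (fun p : V × V => H.Adj p.1 p.2) := by
        intro p hp
        rcases Finset.mem_insert.mp hp with rfl | hp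
        · exact hxy_mem
        · rw [Finset.mem_singleton.mp hp]
          exact Finset.mem_filter.mpr ⟨Finset.mem_product.mpr ⟨hy, hx⟩, hadj.symm⟩
      have hc2 : ({((x, y) : V × V), (y, x)} : Finset (V × V)).card = 2 := by
        rw [Finset.card_insert_of_notMem (by simp [Prod.ext_iff, hxyne]),
          Finset.card_singleton]
      have hDBge : 2 ≤ bcr H B B := by
        calc 2 = _ := hc2.symm
          _ ≤ _ := Finset.card_le_card hsub
      have hfeq : ((B ×ˢ B).filter fun p : V × V => H.Adj p.1 p.2)
          = {((x, y) : V × V), (y, x)} :=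
        (Finset.eq_of_subset_of_card_le hsub (by rw [hc2]; exact hDB2)).symm
      have hSBeq : SB = B.card * Δ := by omega
      have hA' := halldeg hSBeq
      have hxv : x ≠ v := by
        intro h
        subst h
        exact Finset.disjoint_left.mp hdisj
          (Finset.mem_filter.mpr ⟨Finset.mem_univ y, hadj⟩) hy
      have hyv : y ≠ v := by
        intro h
        subst h
        exact Finset.disjoint_left.mp hdisj
          (Finset.mem_filter.mpr ⟨Finset.mem_univ x, hadj.symm⟩) hx
      set Nx := Finset.univ.filter (H.Adj x) with hNxdef
      set Ny := Finset.univ.filter (H.Adj y) with hNydef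
      have hNdisj : Disjoint Nx Ny := by
        rw [Finset.disjoint_left]
        intro w hw1 hw2
        exact htf x (Finset.mem_univ x) y (Finset.mem_univ y) w (Finset.mem_univ w)
          ⟨hadj, (Finset.mem_filter.mp hw1).2, (Finset.mem_filter.mp hw2).2⟩
      have hNsub : Nx ∪ Ny ⊆ Finset.univ.erase v := by
        intro w hw
        refine Finset.mem_erase.mpr ⟨?_, Finset.mem_univ w⟩
        intro hwv
        subst hwv
        rcases Finset.mem_union.mp hw with h1 | h1
        · exact Finset.disjoint_left.mp hdisj
            (Finset.mem_filter.mpr ⟨Finset.mem_univ x, ((Finset.mem_filter.mp h1).2).symm⟩) hx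
        · exact Finset.disjoint_left.mp hdisj
            (Finset.mem_filter.mpr ⟨Finset.mem_univ y, ((Finset.mem_filter.mp h1).2).symm⟩) hy
      have hNx : Nx.card = Δ := hA' x hx
      have hNy : Ny.card = Δ := hA' y hy
      have hcard_er : (Finset.univ.erase v).card = n - 1 := by
        rw [Finset.card_erase_of_mem (Finset.mem_univ v), Finset.card_univ]
      have hcard_un : (Nx ∪ Ny).card = 2*Δ := by
        rw [Finset.card_union_of_disjoint hNdisj, hNx, hNy]
        ring
      have h2Δ : 2*Δ ≤ n - 1 := by
        rw [← hcard_un, ← hcard_er]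
        exact Finset.card_le_card hNsub
      have hodd : 2*Δ = n - 1 := by rcases hcases with h | h | h <;> omega
      have heq : Nx ∪ Ny = Finset.univ.erase v :=
        Finset.eq_of_subset_of_card_le hNsub (by omega)
      have hnsub3 : ¬ B ⊆ {v, x, y} := by
        intro hsub'
        have h1 := Finset.card_le_card hsub'
        have h2 : ({v, x, y} : Finset V).card ≤ 3 := by
          calc ({v, x, y} : Finset V).card ≤ ({x, y} : Finset V).card + 1 :=
              Finset.card_insert_le _ _
            _ ≤ (({y} : Finset V).card + 1) + 1 :=
              Nat.succ_le_succ (Finset.card_insert_le _ _)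
            _ = 3 := by rw [Finset.card_singleton]
        omega
      obtain ⟨z, hzB, hzn⟩ := Finset.not_subset.mp hnsub3
      have hznv : z ≠ v := by intro h; exact hzn (by simp [h])
      have hznx : z ≠ x := by intro h; exact hzn (by simp [h])
      have hzny : z ≠ y := by intro h; exact hzn (by simp [h])
      have hz_er : z ∈ Nx ∪ Ny := by
        rw [heq]
        exact Finset.mem_erase.mpr ⟨hznv, Finset.mem_univ z⟩
      have hzpair : ∀ w₁ w₂ : V, w₁ ∈ B → w₂ ∈ B → H.Adj w₁ w₂ →
          (w₁ = x ∧ w₂ = y) ∨ (w₁ = y ∧ w₂ = x) := by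
        intro w₁ w₂ h1 h2 h3
        have hm : ((w₁, w₂) : V × V) ∈ (B ×ˢ B).filter (fun p : V × V => H.Adj p.1 p.2) :=
          Finset.mem_filter.mpr ⟨Finset.mem_product.mpr ⟨h1, h2⟩, h3⟩
        rw [hfeq] at hm
        rcases Finset.mem_insert.mp hm with h | h
        · exact Or.inl ⟨congrArg Prod.fst h, congrArg Prod.snd h⟩
        · exact Or.inr ⟨congrArg Prod.fst (Finset.mem_singleton.mp h),
            congrArg Prod.snd (Finset.mem_singleton.mp h)⟩
      rcases Finset.mem_union.mp hz_er with h1 | h1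
      · have hxz : H.Adj x z := (Finset.mem_filter.mp h1).2
        rcases hzpair x z hx hzB hxz with ⟨-, h⟩ | ⟨h, -⟩
        · exact hzny h
        · exact hxyne h
      · have hyz : H.Adj y z := (Finset.mem_filter.mp h1).2
        rcases hzpair y z hy hzB hyz with ⟨h, -⟩ | ⟨-, h⟩
        · exact hxyne h.symm
        · exact hznx h


lemma bridge (K : SimpleGraph V) : 2 * K.edgeSet.ncard = bcr K Finset.univ Finset.univ := by
  classical
  letI : DecidableRel K.Adj := Classical.decRel _
  have h1 : K.edgeSet.ncard = K.edgeFinset.card := Set.ncard_eq_toFinset_card' _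
  rw [h1, ← SimpleGraph.sum_degrees_eq_twice_card_edges, bcr_eq_sum]
  refine Finset.sum_congr rfl fun u _ => ?_
  rw [SimpleGraph.degree, SimpleGraph.neighborFinset_eq_filter]
  unfold bdeg
  rw [Finset.filter_congr_decidable]

lemma bdeg_compl {H1 H2 : SimpleGraph V} (u : V)
    (h : ∀ w, (H1.Adj u w ∨ H2.Adj u w) ↔ w ≠ u)
    (hd : ∀ w, H1.Adj u w → H2.Adj u w → False) :
    bdeg H1 Finset.univ u + bdeg H2 Finset.univ u = Fintype.card V - 1 := by
  unfold bdeg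
  have hdisj : Disjoint (Finset.univ.filter (H1.Adj u)) (Finset.univ.filter (H2.Adj u)) := by
    rw [Finset.disjoint_left]
    intro w hw1 hw2
    exact hd w (Finset.mem_filter.mp hw1).2 (Finset.mem_filter.mp hw2).2
  rw [← Finset.card_union_of_disjoint hdisj]
  have hun : Finset.univ.filter (H1.Adj u) ∪ Finset.univ.filter (H2.Adj u)
      = Finset.univ.erase u := by
    ext w
    simp only [Finset.mem_union, Finset.mem_filter, Finset.mem_univ, true_and,
      Finset.mem_erase, and_true]
    exact h w
  rw [hun, Finset.card_erase_of_mem (Finset.mem_univ u), Finset.card_univ]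

lemma compl_count (K : SimpleGraph V) (hn : 1 ≤ Fintype.card V) :
    bcr K Finset.univ Finset.univ + bcr Kᶜ Finset.univ Finset.univ
      = (Fintype.card V)^2 - Fintype.card V := by
  rw [bcr_eq_sum, bcr_eq_sum, ← Finset.sum_add_distrib]
  have h1 : ∀ u : V, bdeg K Finset.univ u + bdeg Kᶜ Finset.univ u = Fintype.card V - 1 := by
    intro u
    refine bdeg_compl u (fun w => ?_) (fun w h1 h2 => ?_)
    · constructor
      · rintro (h | h)
        · exact h.ne'
        · exact fun hwu => ((SimpleGraph.compl_adj _ _ _).mp h).1 hwu.symm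
      · intro hwu
        by_cases h : K.Adj u w
        · exact Or.inl h
        · exact Or.inr ((SimpleGraph.compl_adj _ _ _).mpr ⟨fun h' => hwu h'.symm, h⟩)
    · exact ((SimpleGraph.compl_adj _ _ _).mp h2).2 h1
  rw [Finset.sum_congr rfl fun u _ => h1 u, Finset.sum_const, Finset.card_univ,
    smul_eq_mul]
  obtain ⟨m, hm⟩ := Nat.exists_eq_add_of_le hn
  rw [hm, pow_two]
  have e1 : 1 + m - 1 = m := by omega
  rw [e1]
  have e2 : (1+m)*(1+m) = (1+m)*m + (1+m) := by ring
  omega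

lemma conn_cross {G : SimpleGraph V} (hconn : G.Connected) :
    ∀ A B : Finset V, A.Nonempty → B.Nonempty → Disjoint A B → A ∪ B = Finset.univ →
      ¬(∀ a ∈ A, ∀ b ∈ B, Gᶜ.Adj a b) := by
  intro A B hA hB hdisj hun hall
  obtain ⟨a₀, ha₀⟩ := hA
  obtain ⟨b₀, hb₀⟩ := hB
  have key : ∀ (c d : V) (_w : G.Walk c d), c ∈ A → d ∈ A := by
    intro c d w
    induction w with
    | nil => exact id
    | @cons c₁ c₂ d₁ h p ih =>
      intro hc
      have hmem : c₂ ∈ A ∪ B := by rw [hun]; exact Finset.mem_univ c₂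
      rcases Finset.mem_union.mp hmem with h2 | h2
      · exact ih h2
      · exact absurd h ((SimpleGraph.compl_adj _ _ _).mp (hall c₁ hc c₂ h2)).2
  obtain ⟨w⟩ := hconn.preconnected a₀ b₀
  exact Finset.disjoint_left.mp hdisj (key a₀ b₀ w ha₀) hb₀


lemma df_of_42 {G : SimpleGraph V} (h42 : IsSTGraph G 4 2) : DFree Gᶜ := by
  intro a b c d hcd hab hac had hbc hbd
  have hab' : a ≠ b := hab.ne
  have hac' : a ≠ c := hac.ne
  have had' : a ≠ d := had.ne
  have hbc' : b ≠ c := hbc.ne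
  have hbd' : b ≠ d := hbd.ne
  have nab : ¬G.Adj a b := ((SimpleGraph.compl_adj _ _ _).mp hab).2
  have nac : ¬G.Adj a c := ((SimpleGraph.compl_adj _ _ _).mp hac).2
  have nad : ¬G.Adj a d := ((SimpleGraph.compl_adj _ _ _).mp had).2
  have nbc : ¬G.Adj b c := ((SimpleGraph.compl_adj _ _ _).mp hbc).2
  have nbd : ¬G.Adj b d := ((SimpleGraph.compl_adj _ _ _).mp hbd).2
  have nba : ¬G.Adj b a := fun h => nab h.symm
  have nca : ¬G.Adj c a := fun h => nac h.symm
  have nda : ¬G.Adj d a := fun h => nad h.symm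
  have ncb : ¬G.Adj c b := fun h => nbc h.symm
  have ndb : ¬G.Adj d b := fun h => nbd h.symm
  set S : Finset V := {a, b, c, d} with hS
  have hcard : S.card = 4 := by
    rw [hS, Finset.card_insert_of_notMem (by simp [hab', hac', had']),
      Finset.card_insert_of_notMem (by simp [hbc', hbd']),
      Finset.card_insert_of_notMem (by simp [hcd]), Finset.card_singleton]
  have h2 := h42.2 S hcard
  have hsub : {e : Sym2 V | e ∈ G.edgeSet ∧ ∀ v ∈ e, v ∈ S} ⊆ {s(c, d)} := by
    intro e he
    obtain ⟨hedge, hmem⟩ := he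
    revert hedge hmem
    induction e using Sym2.ind with
    | _ x y =>
      intro hedge hmem
      have hadj : G.Adj x y := (SimpleGraph.mem_edgeSet G).mp hedge
      have hx : x ∈ S := hmem x (Sym2.mem_mk_left x y)
      have hy : y ∈ S := hmem y (Sym2.mem_mk_right x y)
      rw [hS] at hx hy
      simp only [Finset.mem_insert, Finset.mem_singleton] at hx hy
      show s(x, y) ∈ ({s(c, d)} : Set (Sym2 V))
      rw [Set.mem_singleton_iff]
      rcases hx with rfl | rfl | rfl | rfl <;> rcases hy with rfl | rfl | rfl | rfl
      all_goals first
        | exact absurd hadj (G.irrefl)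
        | exact absurd hadj nab
        | exact absurd hadj nba
        | exact absurd hadj nac
        | exact absurd hadj nca
        | exact absurd hadj nad
        | exact absurd hadj nda
        | exact absurd hadj nbc
        | exact absurd hadj ncb
        | exact absurd hadj nbd
        | exact absurd hadj ndb
        | rfl
        | exact Sym2.eq_swap
  have hle : edgesWithin G S ≤ 1 := by
    calc edgesWithin G S
        ≤ ({s(c, d)} : Set (Sym2 V)).ncard :=
          Set.ncard_le_ncard hsub (Set.finite_singleton _)
      _ = 1 := Set.ncard_singleton _
  omega

lemma count_of_struct {G : SimpleGraph V} (hn : 8 ≤ Fintype.card V)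
    (hstr : ∃ A B : Finset V, Disjoint A B ∧ A ∪ B = Finset.univ ∧
      A.card = Fintype.card V / 2 ∧ B.card = (Fintype.card V + 1) / 2 ∧
      G.IsClique (A : Set V) ∧ G.IsClique (B : Set V) ∧
      ∃! p : V × V, p.1 ∈ A ∧ p.2 ∈ B ∧ G.Adj p.1 p.2) :
    G.edgeSet.ncard = (Fintype.card V - 1)^2/4 + 1 := by
  obtain ⟨A, B, hdisj, hun, hcA, hcB, hclA, hclB, p₀, ⟨hp1, hp2, hp3⟩, huq⟩ := hstr
  have hbr := bridge G
  have hsplit := bcr_split (H := G) hdisj hun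
  have hclique_cnt : ∀ (C : Finset V), G.IsClique (C : Set V) →
      bcr G C C = C.card * (C.card - 1) := by
    intro C hcl
    rw [bcr_eq_sum]
    have h1 : ∀ a ∈ C, bdeg G C a = C.card - 1 := by
      intro a ha
      unfold bdeg
      have hfe : C.filter (G.Adj a) = C.erase a := by
        ext w
        simp only [Finset.mem_filter, Finset.mem_erase]
        constructor
        · rintro ⟨hw, hadj⟩
          exact ⟨hadj.ne', hw⟩
        · rintro ⟨hne, hw⟩
          exact ⟨hw, hcl (Finset.mem_coe.mpr ha) (Finset.mem_coe.mpr hw) (Ne.symm hne)⟩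
      rw [hfe, Finset.card_erase_of_mem ha]
    rw [Finset.sum_congr rfl h1, Finset.sum_const, smul_eq_mul]
  have hAA := hclique_cnt A hclA
  have hBB := hclique_cnt B hclB
  have hBA : bcr G B A = 1 := by
    unfold bcr
    have hfe : (B ×ˢ A).filter (fun q : V × V => G.Adj q.1 q.2) = {(p₀.2, p₀.1)} := by
      ext q
      simp only [Finset.mem_filter, Finset.mem_product, Finset.mem_singleton]
      constructor
      · rintro ⟨⟨hq1, hq2⟩, hadj⟩
        have hq := huq (q.2, q.1) ⟨hq2, hq1, hadj.symm⟩
        rw [Prod.ext_iff]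
        exact ⟨congrArg Prod.snd hq, congrArg Prod.fst hq⟩
      · rintro rfl
        exact ⟨⟨hp2, hp1⟩, hp3.symm⟩
    rw [hfe, Finset.card_singleton]
  rw [hcA] at hAA
  rw [hcB] at hBB
  have harith := ar6 (Fintype.card V) hn
  omega

end BarbellAux

open BarbellAux

/-- Every connected [4,2]-graph of order n ≥ 8 has at least ⌊(n-1)²/4⌋ + 1 edges,
with equality iff G is the barbell graph B_n. -/
theorem stmt_12 {V : Type*} [Fintype V] [DecidableEq V] (G : SimpleGraph V)
    (h42 : IsSTGraph G 4 2) (hconn : G.Connected) (hn : 8 ≤ Fintype.card V) :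
    (Fintype.card V - 1) ^ 2 / 4 + 1 ≤ G.edgeSet.ncard ∧
      (G.edgeSet.ncard = (Fintype.card V - 1) ^ 2 / 4 + 1 ↔
        ∃ A B : Finset V, Disjoint A B ∧ A ∪ B = Finset.univ ∧
          A.card = Fintype.card V / 2 ∧ B.card = (Fintype.card V + 1) / 2 ∧
          G.IsClique (A : Set V) ∧ G.IsClique (B : Set V) ∧
          ∃! p : V × V, p.1 ∈ A ∧ p.2 ∈ B ∧ G.Adj p.1 p.2) := by
  classical
  have hdf : DFree Gᶜ := df_of_42 h42
  have hcn := conn_cross hconn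
  have hbrG := bridge G
  have hbrH := bridge Gᶜ
  have hcc := compl_count G (by omega)
  have har5 := ar5 (Fintype.card V) (by omega)
  by_cases htri : ∃ x y z : V, Gᶜ.Adj x y ∧ Gᶜ.Adj x z ∧ Gᶜ.Adj y z
  · obtain ⟨x, y, z, h1, h2, h3⟩ := htri
    have hstep := tri_step hdf (Finset.mem_univ x) (Finset.mem_univ y)
      (Finset.mem_univ z) h1 h2 h3
    have hA := lemA hdf (Finset.univ \ {x, y, z})
    have hcT : ({x, y, z} : Finset V).card = 3 := by
      rw [Finset.card_insert_of_notMem (by simp [h1.ne, h2.ne]),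
        Finset.card_insert_of_notMem (by simp [h3.ne]), Finset.card_singleton]
    have hcA : (Finset.univ \ ({x, y, z} : Finset V)).card = Fintype.card V - 3 := by
      rw [Finset.card_sdiff_of_subset (Finset.subset_univ _), Finset.card_univ, hcT]
    rw [hcA] at hA
    rw [Finset.card_univ] at hstep
    have har2 := ar2 (Fintype.card V) hn
    have hineq : (Fintype.card V - 1)^2/4 + 1 + 1 ≤ G.edgeSet.ncard := by omega
    exact ⟨by omega, ⟨fun heq => absurd heq (by omega),
      fun hstr => count_of_struct hn hstr⟩⟩
  · push_neg at htri
    have htf : TFOn Gᶜ Finset.univ := fun x _ y _ z _ hand =>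
      htri x y z hand.1 hand.2.1 hand.2.2
    by_cases hD : 2 * ((Fintype.card V)^2/4) ≤ bcr Gᶜ Finset.univ Finset.univ + 2
    · obtain ⟨heq2q, Astr⟩ := lemM htf hcn hn hD
      have heG : G.edgeSet.ncard = (Fintype.card V - 1)^2/4 + 1 := by omega
      refine ⟨le_of_eq heG.symm, ⟨fun _ => ?_, fun _ => heG⟩⟩
      obtain ⟨A, B, hd1, hd2, hd3, hd4, hd5, hd6, ⟨p₀, ⟨hp1, hp2, hp3⟩, huq⟩⟩ := Astr
      refine ⟨A, B, hd1, hd2, hd3, hd4, ?_, ?_, ⟨p₀, ⟨hp1, hp2, ?_⟩, ?_⟩⟩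
      · intro u hu w hw hne
        by_contra hna
        exact hd5 u (Finset.mem_coe.mp hu) w (Finset.mem_coe.mp hw)
          ((SimpleGraph.compl_adj _ _ _).mpr ⟨hne, hna⟩)
      · intro u hu w hw hne
        by_contra hna
        exact hd6 u (Finset.mem_coe.mp hu) w (Finset.mem_coe.mp hw)
          ((SimpleGraph.compl_adj _ _ _).mpr ⟨hne, hna⟩)
      · have hne : p₀.1 ≠ p₀.2 := fun he =>
          Finset.disjoint_left.mp hd1 hp1 (he ▸ hp2)
        by_contra hna
        exact hp3 ((SimpleGraph.compl_adj _ _ _).mpr ⟨hne, hna⟩)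
      · rintro q ⟨hq1, hq2, hq3⟩
        exact huq q ⟨hq1, hq2, fun hc => ((SimpleGraph.compl_adj _ _ _).mp hc).2 hq3⟩
    · push_neg at hD
      have hineq : (Fintype.card V - 1)^2/4 + 1 + 1 ≤ G.edgeSet.ncard := by omega
      exact ⟨by omega, ⟨fun heq => absurd heq (by omega),
        fun hstr => count_of_struct hn hstr⟩⟩
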